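/- arXiv:1707.01824 — 2 statements merged into one kernel-verified Lean document; each statement's English description precedes it below -/
import Mathlib

section
/- For all t, α, β > 0, the double series Σ_{n≥0} ((βt)^{2n}/(2n)!) Σ_{m=0}^{n} C(n,m) (α/β)^{2m} m! t^{-m} equals Φ₃(1; 1/2; t(α/2)², (βt/2)²), where Φ₃ is the Humbert confluent hypergeometric function. -/
/-- The Humbert confluent hypergeometric function `Φ₃(a;b;x,y)` (real version). -/
noncomputable def humbertPhi3 (a b x y : ℝ) : ℝ :=
  ∑' p : ℕ × ℕ,
    (Polynomial.eval a (ascPochhammer ℝ p.1) /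
        Polynomial.eval b (ascPochhammer ℝ (p.1 + p.2))) *
      (x ^ p.1 / (p.1.factorial : ℝ)) * (y ^ p.2 / (p.2.factorial : ℝ))

/-- Legendre duplication in Pochhammer form: `(1/2)_n * 4^n * n! = (2n)!`. -/
lemma evalHalfAsc (n : ℕ) :
    Polynomial.eval (1/2 : ℝ) (ascPochhammer ℝ n) * (4 ^ n * (n.factorial : ℝ)) =
      ((2 * n).factorial : ℝ) := by
  induction n with
  | zero => simp
  | succ n ih =>
    rw [ascPochhammer_succ_right, Polynomial.eval_mul]
    have h2 : 2 * (n + 1) = (2 * n + 1) + 1 := by ring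
    rw [h2]
    push_cast [Nat.factorial_succ]
    push_cast at ih
    simp only [Polynomial.eval_add, Polynomial.eval_X, Polynomial.eval_natCast]
    linear_combination ((1 / 2 + (n : ℝ)) * 4 * ((n : ℝ) + 1)) * ih

lemma evalHalfAsc' (n : ℕ) :
    Polynomial.eval (1/2 : ℝ) (ascPochhammer ℝ n) =
      ((2 * n).factorial : ℝ) / (4 ^ n * (n.factorial : ℝ)) := by
  rw [eq_div_iff (by positivity)]
  exact evalHalfAsc n

/-- The common term of the double series. -/
noncomputable def fTerm (t α β : ℝ) (p : ℕ × ℕ) : ℝ :=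
  t ^ p.1 * α ^ (2 * p.1) * (β * t) ^ (2 * p.2) * ((p.1 + p.2).factorial : ℝ) /
    (((2 * (p.1 + p.2)).factorial : ℝ) * (p.2.factorial : ℝ))

lemma fTerm_summable (t α β : ℝ) (ht : 0 < t) (hα : 0 < α) (hβ : 0 < β) :
    Summable (fTerm t α β) := by
  have h1 : (0 : ℕ → ℝ) ≤ fun m : ℕ => (t * α ^ 2) ^ m / (m.factorial : ℝ) := by
    rw [Pi.le_def]
    intro m
    simp only [Pi.zero_apply]
    positivity
  have h2 : (0 : ℕ → ℝ) ≤ fun k : ℕ => ((β * t) ^ 2) ^ k / (k.factorial : ℝ) := by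
    rw [Pi.le_def]
    intro k
    simp only [Pi.zero_apply]
    positivity
  have hg := Summable.mul_of_nonneg (f := fun m : ℕ => (t * α ^ 2) ^ m / (m.factorial : ℝ))
      (g := fun k : ℕ => ((β * t) ^ 2) ^ k / (k.factorial : ℝ))
      (Real.summable_pow_div_factorial (t * α ^ 2))
      (Real.summable_pow_div_factorial ((β * t) ^ 2)) h1 h2
  have hnn : ∀ p : ℕ × ℕ, 0 ≤ fTerm t α β p := by
    intro ⟨m, k⟩
    unfold fTerm
    positivity
  refine Summable.of_nonneg_of_le hnn (fun p => ?_) hg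
  obtain ⟨m, k⟩ := p
  have hA' : (t * α ^ 2) ^ m * ((β * t) ^ 2) ^ k
      = t ^ m * α ^ (2 * m) * (β * t) ^ (2 * k) := by
    rw [mul_pow, ← pow_mul, ← pow_mul]
  have hnat : (m + k).factorial * m.factorial ≤ (2 * (m + k)).factorial := by
    calc (m + k).factorial * m.factorial
        ≤ (m + k).factorial * (m + k).factorial :=
          Nat.mul_le_mul_left _ (Nat.factorial_le (Nat.le_add_right m k))
      _ ≤ (2 * (m + k)).factorial := by
          rw [two_mul]
          exact Nat.le_of_dvd (Nat.factorial_pos _)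
            (Nat.factorial_mul_factorial_dvd_factorial_add _ _)
  have hR : ((m + k).factorial : ℝ) * (m.factorial : ℝ) ≤ ((2 * (m + k)).factorial : ℝ) := by
    exact_mod_cast hnat
  rw [div_mul_div_comm, hA']
  unfold fTerm
  rw [div_le_div_iff₀ (by positivity) (by positivity)]
  have hA : (0 : ℝ) ≤ t ^ m * α ^ (2 * m) * (β * t) ^ (2 * k) := by positivity
  calc t ^ m * α ^ (2 * m) * (β * t) ^ (2 * k) * ((m + k).factorial : ℝ) *
        ((m.factorial : ℝ) * (k.factorial : ℝ))
      = (t ^ m * α ^ (2 * m) * (β * t) ^ (2 * k)) *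
          (((m + k).factorial : ℝ) * (m.factorial : ℝ)) * (k.factorial : ℝ) := by ring
    _ ≤ (t ^ m * α ^ (2 * m) * (β * t) ^ (2 * k)) *
          ((2 * (m + k)).factorial : ℝ) * (k.factorial : ℝ) := by
        have hk : (0 : ℝ) ≤ (k.factorial : ℝ) := by positivity
        exact mul_le_mul_of_nonneg_right (mul_le_mul_of_nonneg_left hR hA) hk
    _ = t ^ m * α ^ (2 * m) * (β * t) ^ (2 * k) *
          (((2 * (m + k)).factorial : ℝ) * (k.factorial : ℝ)) := by ring

/-- For `t, α, β > 0`,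
`Σ_{n≥0} ((βt)^{2n}/(2n)!) Σ_{m=0}^{n} C(n,m) (α/β)^{2m} m! t^{-m}
  = Φ₃(1; 1/2; t(α/2)², (βt/2)²)`. -/
theorem series_eq_humbertPhi3_half (t α β : ℝ) (ht : 0 < t) (hα : 0 < α) (hβ : 0 < β) :
    (∑' n : ℕ, ((β * t) ^ (2 * n) / ((2 * n).factorial : ℝ)) *
        ∑ m ∈ Finset.range (n + 1),
          (n.choose m : ℝ) * (α / β) ^ (2 * m) * (m.factorial : ℝ) * t ^ (-(m : ℤ))) =
      humbertPhi3 1 (1 / 2) (t * (α / 2) ^ 2) ((β * t / 2) ^ 2) := by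
  have ht0 : t ≠ 0 := ht.ne'
  have hβ0 : β ≠ 0 := hβ.ne'
  have hsum : Summable (fTerm t α β) := fTerm_summable t α β ht hα hβ
  -- Step B: the Humbert function equals the tsum of fTerm over ℕ × ℕ
  have hB : humbertPhi3 1 (1 / 2) (t * (α / 2) ^ 2) ((β * t / 2) ^ 2)
      = ∑' p : ℕ × ℕ, fTerm t α β p := by
    unfold humbertPhi3
    refine tsum_congr fun p => ?_
    obtain ⟨m, k⟩ := p
    simp only [ascPochhammer_eval_one, evalHalfAsc']
    unfold fTerm
    have hf1 : ((2 * (m + k)).factorial : ℝ) ≠ 0 := by positivity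
    have hf2 : ((m + k).factorial : ℝ) ≠ 0 := by positivity
    have hf3 : (m.factorial : ℝ) ≠ 0 := by positivity
    have hf4 : (k.factorial : ℝ) ≠ 0 := by positivity
    field_simp
    have h4m : ((1:ℝ)/4)^m * 4^m = 1 := by rw [← mul_pow]; norm_num
    have h4k : ((1:ℝ)/4)^k * 4^k = 1 := by rw [← mul_pow]; norm_num
    linear_combination (t ^ m * t ^ (k * 2) * α ^ (m * 2) * β ^ (k * 2)) *
      (((1:ℝ)/4)^k * 4^k * h4m + h4k)
  -- Step A: the double series equals the tsum of fTerm over ℕ × ℕ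
  have hA : (∑' p : ℕ × ℕ, fTerm t α β p)
      = ∑' n : ℕ, ((β * t) ^ (2 * n) / ((2 * n).factorial : ℝ)) *
          ∑ m ∈ Finset.range (n + 1),
            (n.choose m : ℝ) * (α / β) ^ (2 * m) * (m.factorial : ℝ) * t ^ (-(m : ℤ)) := by
    have hsum2 : Summable fun x : (Σ n : ℕ, {p // p ∈ Finset.HasAntidiagonal.antidiagonal n}) =>
        fTerm t α β (Finset.HasAntidiagonal.sigmaAntidiagonalEquivProd x) :=
      Finset.HasAntidiagonal.sigmaAntidiagonalEquivProd.summable_iff.mpr hsum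
    rw [← Finset.HasAntidiagonal.sigmaAntidiagonalEquivProd.tsum_eq (fTerm t α β)]
    rw [Summable.tsum_sigma' (fun n => (hasSum_fintype _).summable) hsum2]
    refine tsum_congr fun n => ?_
    rw [tsum_fintype]
    simp only [Finset.HasAntidiagonal.sigmaAntidiagonalEquivProd_apply]
    rw [Finset.sum_coe_sort (Finset.HasAntidiagonal.antidiagonal n) (fTerm t α β)]
    rw [Finset.Nat.sum_antidiagonal_eq_sum_range_succ_mk]
    rw [Finset.mul_sum]
    refine Finset.sum_congr rfl fun m hm => ?_
    have hmn : m ≤ n := Nat.lt_succ_iff.mp (Finset.mem_range.mp hm)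
    unfold fTerm
    simp only
    have hadd : m + (n - m) = n := Nat.add_sub_cancel' hmn
    rw [hadd]
    rw [Nat.cast_choose ℝ hmn]
    rw [zpow_neg, zpow_natCast]
    have hpow : (β * t) ^ (2 * n) = (β * t) ^ (2 * m) * (β * t) ^ (2 * (n - m)) := by
      rw [← pow_add]
      congr 1
      omega
    rw [hpow]
    have hf1 : ((2 * n).factorial : ℝ) ≠ 0 := by positivity
    have hf2 : (n.factorial : ℝ) ≠ 0 := by positivity
    have hf3 : (m.factorial : ℝ) ≠ 0 := by positivity
    have hf4 : ((n - m).factorial : ℝ) ≠ 0 := by positivity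
    field_simp
    have hbm : β ^ (m * 2) * β⁻¹ ^ (m * 2) = 1 := by rw [← mul_pow, mul_inv_cancel₀ hβ0, one_pow]
    linear_combination (-(t ^ (m * 2) * α ^ (m * 2))) * hbm
  rw [hB, hA]
end

section
/- For all t, α, β > 0, the double series t · Σ_{n≥0} ((βt)^{2n}/(2n+1)!) Σ_{m=0}^{n} C(n,m) (α/β)^{2m} m! t^{-m} equals t · Φ₃(1; 3/2; t(α/2)², (βt/2)²). -/
lemma poch_fact_aux (n : ℕ) :
    Polynomial.eval (3/2 : ℝ) (ascPochhammer ℝ n) * (4 ^ n * n.factorial) =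
      ((2 * n + 1).factorial : ℝ) := by
  induction n with
  | zero => simp
  | succ n ih =>
    have key : ((2 * (n+1) + 1).factorial : ℝ)
        = (2*n+3) * ((2*n+2) * ((2 * n + 1).factorial : ℝ)) := by
      have h : 2 * (n+1) + 1 = ((2*n+1)+1)+1 := by ring
      rw [h, Nat.factorial_succ, Nat.factorial_succ]
      push_cast; ring
    rw [ascPochhammer_succ_eval, key, ← ih, Nat.factorial_succ]
    push_cast; ring

lemma poch_ge_aux (n : ℕ) :
    (n.factorial : ℝ) ≤ Polynomial.eval (3/2 : ℝ) (ascPochhammer ℝ n) := by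
  induction n with
  | zero => simp
  | succ n ih =>
    rw [ascPochhammer_succ_eval, Nat.factorial_succ]
    push_cast
    have h1 : (0:ℝ) < Polynomial.eval (3/2 : ℝ) (ascPochhammer ℝ n) :=
      ascPochhammer_pos n _ (by norm_num)
    have h2 : (0:ℝ) ≤ (n.factorial : ℝ) := by positivity
    nlinarith

set_option maxHeartbeats 1000000 in
/-- For `t, α, β > 0`,
`t · Σ_{n≥0} ((βt)^{2n}/(2n+1)!) Σ_{m=0}^{n} C(n,m) (α/β)^{2m} m! t^{-m}
  = t · Φ₃(1; 3/2; t(α/2)², (βt/2)²)`. -/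
theorem series_eq_humbertPhi3_threeHalves (t α β : ℝ) (ht : 0 < t) (hα : 0 < α) (hβ : 0 < β) :
    (t * ∑' n : ℕ, ((β * t) ^ (2 * n) / ((2 * n + 1).factorial : ℝ)) *
        ∑ m ∈ Finset.range (n + 1),
          (n.choose m : ℝ) * (α / β) ^ (2 * m) * (m.factorial : ℝ) * t ^ (-(m : ℤ))) =
      t * humbertPhi3 1 (3 / 2) (t * (α / 2) ^ 2) ((β * t / 2) ^ 2) := by
  have ht0 : t ≠ 0 := ht.ne'
  have hβ0 : β ≠ 0 := hβ.ne'
  set x : ℝ := t * (α / 2) ^ 2 with hxdef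
  set y : ℝ := (β * t / 2) ^ 2 with hydef
  have hx0 : 0 < x := by positivity
  have hy0 : 0 < y := by positivity
  set f : ℕ × ℕ → ℝ := fun p =>
    (Polynomial.eval (1:ℝ) (ascPochhammer ℝ p.1) /
        Polynomial.eval (3/2 : ℝ) (ascPochhammer ℝ (p.1 + p.2))) *
      (x ^ p.1 / (p.1.factorial : ℝ)) * (y ^ p.2 / (p.2.factorial : ℝ)) with hfdef
  have hsum : Summable f := by
    have hbound : Summable (fun p : ℕ × ℕ => (x ^ p.1 / p.1.factorial) * (y ^ p.2 / p.2.factorial)) :=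
      (Real.summable_pow_div_factorial x).mul_of_nonneg (Real.summable_pow_div_factorial y)
        (fun n => by positivity) (fun n => by positivity)
    refine Summable.of_nonneg_of_le (fun p => ?_) (fun p => ?_) hbound
    · have hP : (0:ℝ) < Polynomial.eval (3/2 : ℝ) (ascPochhammer ℝ (p.1 + p.2)) :=
        ascPochhammer_pos _ _ (by norm_num)
      have h1 : (0:ℝ) ≤ Polynomial.eval (1:ℝ) (ascPochhammer ℝ p.1) := by
        rw [ascPochhammer_eval_one]; positivity
      positivity
    · obtain ⟨m, k⟩ := p
      simp only [hfdef, ascPochhammer_eval_one]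
      have hP : (0:ℝ) < Polynomial.eval (3/2 : ℝ) (ascPochhammer ℝ (m + k)) :=
        ascPochhammer_pos _ _ (by norm_num)
      have h1 : (m.factorial : ℝ) ≤ Polynomial.eval (3/2 : ℝ) (ascPochhammer ℝ (m + k)) := by
        refine le_trans ?_ (poch_ge_aux (m + k))
        exact_mod_cast Nat.factorial_le (Nat.le_add_right m k)
      have hd : (m.factorial : ℝ) / Polynomial.eval (3/2 : ℝ) (ascPochhammer ℝ (m + k)) ≤ 1 :=
        (div_le_one hP).mpr h1
      have ha : (0:ℝ) ≤ x ^ m / m.factorial := by positivity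
      have hb : (0:ℝ) ≤ y ^ k / k.factorial := by positivity
      calc (m.factorial : ℝ) / Polynomial.eval (3/2 : ℝ) (ascPochhammer ℝ (m + k)) *
            (x ^ m / m.factorial) * (y ^ k / k.factorial)
          ≤ 1 * (x ^ m / m.factorial) * (y ^ k / k.factorial) := by
            exact mul_le_mul_of_nonneg_right (mul_le_mul_of_nonneg_right hd ha) hb
        _ = (x ^ m / m.factorial) * (y ^ k / k.factorial) := by ring
  congr 1
  rw [humbertPhi3]
  have he := (Finset.HasAntidiagonal.sigmaAntidiagonalEquivProd (A := ℕ)).tsum_eq f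
  rw [← he]
  have hsum' : Summable (f ∘ Finset.HasAntidiagonal.sigmaAntidiagonalEquivProd (A := ℕ)) :=
    (Equiv.summable_iff _).mpr hsum
  rw [show (fun σ => f (Finset.HasAntidiagonal.sigmaAntidiagonalEquivProd (A := ℕ) σ)) =
        (f ∘ Finset.HasAntidiagonal.sigmaAntidiagonalEquivProd (A := ℕ)) from rfl]
  rw [Summable.tsum_sigma hsum']
  refine tsum_congr fun n => ?_
  have hinner : ∑' c : ↑(Finset.HasAntidiagonal.antidiagonal n),
      (f ∘ Finset.HasAntidiagonal.sigmaAntidiagonalEquivProd (A := ℕ)) ⟨n, c⟩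
      = ∑ ij ∈ Finset.HasAntidiagonal.antidiagonal n, f ij := by
    rw [tsum_fintype]
    exact Finset.sum_finset_coe _ _
  rw [hinner, Finset.Nat.sum_antidiagonal_eq_sum_range_succ_mk, Finset.mul_sum]
  refine Finset.sum_congr rfl fun m hm => ?_
  rw [Finset.mem_range] at hm
  obtain ⟨j, rfl⟩ : ∃ j, n = m + j := ⟨n - m, (Nat.add_sub_cancel' (Nat.lt_succ_iff.mp hm)).symm⟩
  simp only [hfdef, Nat.add_sub_cancel_left, ascPochhammer_eval_one]
  have hP : (0:ℝ) < Polynomial.eval (3/2 : ℝ) (ascPochhammer ℝ (m + j)) :=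
    ascPochhammer_pos _ _ (by norm_num)
  have hfact := poch_fact_aux (m + j)
  have hc : (((m + j).choose m : ℝ)) * m.factorial * j.factorial = ((m + j).factorial : ℝ) := by
    rw [Nat.choose_symm_add]
    exact_mod_cast Nat.add_choose_mul_factorial_mul_factorial m j
  rw [← hfact]
  rw [zpow_neg, zpow_natCast]
  have hm0 : (m.factorial : ℝ) ≠ 0 := by positivity
  have hj0 : (j.factorial : ℝ) ≠ 0 := by positivity
  have hchoose : (((m + j).choose m : ℝ)) = ((m + j).factorial : ℝ) / (m.factorial * j.factorial) := by
    field_simp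
    linear_combination hc
  rw [hchoose, hxdef, hydef]
  field_simp
  rw [div_pow, div_pow, div_pow]
  field_simp
  ring
end
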